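/- Let n₀ ≥ 1, β ≥ 1, and n₁ = β·n₀ + r with 0 < r < n₀, and K ≥ 1. Let Z⁽⁰⁾ : Fin n₀ → Fin K and Z⁽¹⁾ : Fin n₁ → Fin K be cluster assignments with Δ(Z) = 0. Then there exists a surjective function T : Fin n₁ → Fin n₀ such that every fiber T⁻¹({i}) has size β or β + 1, the set R_T := {i : #T⁻¹({i}) = β + 1} has exactly r elements, and Z⁽¹⁾(j) = Z⁽⁰⁾(T(j)) for all j ∈ Fin n₁. -/

import Mathlib

open Finset

/-- The group-fairness level Δ(Z) for two cluster assignments. -/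
noncomputable def fairnessLevel {n₀ n₁ K : ℕ}
    (Z0 : Fin n₀ → Fin K) (Z1 : Fin n₁ → Fin K) : ℝ :=
  (1 / 2) * ∑ k : Fin K,
    |((Finset.univ.filter (fun i => Z0 i = k)).card : ℝ) / n₀
      - ((Finset.univ.filter (fun j => Z1 j = k)).card : ℝ) / n₁|

/-- Gluing lemma: given target fiber sizes `m` compatible with cluster counts,
there is a map with prescribed fibers and cluster compatibility. -/
lemma exists_map_of_fiber_sizes {n₀ n₁ K : ℕ} (Z0 : Fin n₀ → Fin K) (Z1 : Fin n₁ → Fin K)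
    (m : Fin n₀ → ℕ)
    (hm : ∀ k : Fin K, ∑ i ∈ univ.filter (fun i => Z0 i = k), m i
        = (univ.filter (fun j => Z1 j = k)).card) :
    ∃ T : Fin n₁ → Fin n₀,
      (∀ i : Fin n₀, (univ.filter (fun j => T j = i)).card = m i) ∧
      (∀ j : Fin n₁, Z1 j = Z0 (T j)) := by
  have hcard : ∀ k : Fin K,
      Fintype.card {j : Fin n₁ // Z1 j = k}
        = Fintype.card {s : Σ i : Fin n₀, Fin (m i) // Z0 s.1 = k} := by
    intro k
    rw [Fintype.card_subtype]
    rw [Fintype.card_congr (Equiv.subtypeSigmaEquiv (fun i => Fin (m i)) (fun i => Z0 i = k))]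
    rw [Fintype.card_sigma]
    simp only [Fintype.card_fin]
    rw [← hm k]
    exact Finset.sum_subtype _ (fun x => by simp only [Finset.mem_filter, Finset.mem_univ, true_and]) m
  let e : Fin n₁ ≃ (Σ i : Fin n₀, Fin (m i)) :=
    Equiv.ofFiberEquiv (f := Z1) (g := fun s => Z0 s.1)
      (fun k => Fintype.equivOfCardEq (hcard k))
  refine ⟨fun j => (e j).1, ?_, ?_⟩
  · intro i
    have h1 : (univ.filter (fun j => (e j).1 = i)).card
        = Fintype.card {j : Fin n₁ // (e j).1 = i} := (Fintype.card_subtype _).symm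
    rw [h1]
    rw [Fintype.card_congr (e.subtypeEquiv (p := fun j => (e j).1 = i)
      (q := fun s : Σ i' : Fin n₀, Fin (m i') => s.1 = i) (fun j => Iff.rfl))]
    rw [Fintype.card_congr (Equiv.subtypeSigmaEquiv (fun i => Fin (m i)) (fun i' => i' = i))]
    rw [Fintype.card_sigma]
    simp only [Fintype.card_fin]
    rw [← Finset.sum_subtype ({i} : Finset (Fin n₀)) (by simp) m]
    simp
  · intro j
    exact (Equiv.ofFiberEquiv_map (f := Z1) (g := fun s : Σ i : Fin n₀, Fin (m i) => Z0 s.1) (fun k => Fintype.equivOfCardEq (hcard k)) j).symm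

theorem perfectly_fair_exists_almost_matching_map
    (n₀ n₁ β r K : ℕ) (hn₀ : 1 ≤ n₀) (hβ : 1 ≤ β) (hr : 0 < r) (hrn : r < n₀)
    (hn₁ : n₁ = β * n₀ + r) (hK : 1 ≤ K)
    (Z0 : Fin n₀ → Fin K) (Z1 : Fin n₁ → Fin K)
    (hfair : fairnessLevel Z0 Z1 = 0) :
    ∃ T : Fin n₁ → Fin n₀,
      Function.Surjective T ∧
      (∀ i : Fin n₀, (Finset.univ.filter (fun j => T j = i)).card = β ∨
        (Finset.univ.filter (fun j => T j = i)).card = β + 1) ∧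
      (Finset.univ.filter
        (fun i : Fin n₀ => (Finset.univ.filter (fun j => T j = i)).card = β + 1)).card = r ∧
      (∀ j : Fin n₁, Z1 j = Z0 (T j)) := by
  classical
  set c0 : Fin K → ℕ := fun k => (univ.filter (fun i => Z0 i = k)).card with hc0
  set c1 : Fin K → ℕ := fun k => (univ.filter (fun j => Z1 j = k)).card with hc1def
  have hn₀' : (0:ℝ) < n₀ := by exact_mod_cast hn₀
  have hn₁pos : 0 < n₁ := by omega
  have hn₁' : (0:ℝ) < n₁ := by exact_mod_cast hn₁pos
  -- from fairness: n₁ * c0 k = n₀ * c1 k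
  have key : ∀ k : Fin K, n₁ * c0 k = n₀ * c1 k := by
    intro k
    have hsum : ∑ k : Fin K, |((c0 k : ℝ)) / n₀ - ((c1 k : ℝ)) / n₁| = 0 := by
      have := hfair
      unfold fairnessLevel at this
      linarith
    have hterm : |((c0 k : ℝ)) / n₀ - ((c1 k : ℝ)) / n₁| = 0 := by
      have := (Finset.sum_eq_zero_iff_of_nonneg (fun k _ => abs_nonneg _)).mp hsum k
        (mem_univ k)
      exact this
    have heq : ((c0 k : ℝ)) / n₀ = ((c1 k : ℝ)) / n₁ := by
      have := abs_eq_zero.mp hterm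
      linarith
    have : (c0 k : ℝ) * n₁ = (c1 k : ℝ) * n₀ := by
      rw [div_eq_div_iff hn₀'.ne' hn₁'.ne'] at heq; exact heq
    have h2 : (c0 k) * n₁ = (c1 k) * n₀ := by exact_mod_cast this
    rw [Nat.mul_comm n₁, Nat.mul_comm n₀]
    exact h2
  -- sums of cluster counts
  have hsum0 : ∑ k : Fin K, c0 k = n₀ := by
    have := Finset.card_eq_sum_card_fiberwise
      (f := Z0) (s := univ) (t := univ) (fun x _ => mem_univ _)
    simpa using this.symm
  have hsum1 : ∑ k : Fin K, c1 k = n₁ := by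
    have := Finset.card_eq_sum_card_fiberwise
      (f := Z1) (s := univ) (t := univ) (fun x _ => mem_univ _)
    simpa using this.symm
  -- the defect d k
  set d : Fin K → ℕ := fun k => c1 k - β * c0 k with hd
  have hkey2 : ∀ k, n₀ * c1 k = n₀ * (β * c0 k) + r * c0 k := by
    intro k
    have := key k
    rw [hn₁] at this
    ring_nf at this ⊢
    omega
  have hle : ∀ k, β * c0 k ≤ c1 k := by
    intro k
    have h := hkey2 k
    nlinarith [hkey2 k]
  have hc1eq : ∀ k, c1 k = β * c0 k + d k := by
    intro k; have := hle k; simp only [hd]; omega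
  have hdmul : ∀ k, n₀ * d k = r * c0 k := by
    intro k
    have h1 := hkey2 k
    have h2 := hc1eq k
    have : n₀ * c1 k = n₀ * (β * c0 k) + n₀ * d k := by rw [h2]; ring
    omega
  have hdle : ∀ k, d k ≤ c0 k := by
    intro k
    have h := hdmul k
    have : n₀ * d k ≤ n₀ * c0 k := by
      calc n₀ * d k = r * c0 k := h
        _ ≤ n₀ * c0 k := Nat.mul_le_mul_right _ (le_of_lt hrn)
    exact Nat.le_of_mul_le_mul_left this (by omega)
  have hsd : ∑ k : Fin K, d k = r := by
    have h : n₀ * (∑ k : Fin K, d k) = n₀ * r := by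
      rw [Finset.mul_sum]
      have : ∑ k : Fin K, n₀ * d k = ∑ k : Fin K, r * c0 k := by
        exact Finset.sum_congr rfl (fun k _ => hdmul k)
      rw [this, ← Finset.mul_sum, hsum0, Nat.mul_comm]
    exact Nat.eq_of_mul_eq_mul_left (by omega) h
  -- choose the subsets D k
  have hDex : ∀ k : Fin K, ∃ D ⊆ univ.filter (fun i => Z0 i = k), D.card = d k := by
    intro k
    exact Finset.exists_subset_card_eq (hdle k)
  choose D hDsub hDcard using hDex
  set m : Fin n₀ → ℕ := fun i => if i ∈ D (Z0 i) then β + 1 else β with hm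
  have hmem : ∀ k, ∀ i ∈ univ.filter (fun i => Z0 i = k),
      m i = β + (if i ∈ D k then 1 else 0) := by
    intro k i hi
    have hz : Z0 i = k := (Finset.mem_filter.mp hi).2
    simp only [hm, hz]
    split <;> rfl
  have hmsum : ∀ k : Fin K, ∑ i ∈ univ.filter (fun i => Z0 i = k), m i = c1 k := by
    intro k
    rw [Finset.sum_congr rfl (hmem k), Finset.sum_add_distrib, Finset.sum_const,
      Finset.sum_ite_mem, smul_eq_mul]
    have hinter : (univ.filter (fun i => Z0 i = k)) ∩ D k = D k :=
      Finset.inter_eq_right.mpr (hDsub k)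
    rw [hinter]
    simp only [Finset.sum_const, smul_eq_mul, mul_one]
    rw [hDcard k, hc1eq k]
    ring
  obtain ⟨T, hTcard, hTZ⟩ := exists_map_of_fiber_sizes Z0 Z1 m hmsum
  have hmval : ∀ i, m i = β ∨ m i = β + 1 := by
    intro i; simp only [hm]; split
    · right; rfl
    · left; rfl
  refine ⟨T, ?_, ?_, ?_, hTZ⟩
  · intro i
    have : 0 < (univ.filter (fun j => T j = i)).card := by
      rw [hTcard i]
      rcases hmval i with h | h <;> omega
    obtain ⟨j, hj⟩ := Finset.card_pos.mp this
    exact ⟨j, (Finset.mem_filter.mp hj).2⟩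
  · intro i
    rw [hTcard i]
    exact (hmval i).imp id id
  · have hfe : univ.filter
        (fun i : Fin n₀ => (univ.filter (fun j => T j = i)).card = β + 1)
        = univ.filter (fun i => i ∈ D (Z0 i)) := by
      apply Finset.filter_congr
      intro i _
      rw [hTcard i]
      simp only [hm]
      constructor
      · intro h
        by_contra hc
        rw [if_neg hc] at h
        omega
      · intro h
        rw [if_pos h]
    rw [hfe]
    have hcf := Finset.card_eq_sum_card_fiberwise
      (f := Z0) (s := univ.filter (fun i => i ∈ D (Z0 i))) (t := univ)
      (fun x _ => mem_univ _)
    rw [hcf]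
    rw [← hsd]
    apply Finset.sum_congr rfl
    intro k _
    have hset : ((univ.filter (fun i => i ∈ D (Z0 i))).filter (fun i => Z0 i = k)) = D k := by
      ext i
      simp only [Finset.mem_filter, Finset.mem_univ, true_and]
      constructor
      · rintro ⟨h1, h2⟩; rwa [h2] at h1
      · intro h
        have hz : Z0 i = k := (Finset.mem_filter.mp (hDsub k h)).2
        exact ⟨by rwa [hz], hz⟩
    rw [hset, hDcard k]
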